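/- (Recurrence) For every nonnegative integer n, S_{n+1}^{(r,k)}(x|a_1,…,a_r) = x·S_n^{(r,k)}(x|a_1,…,a_r) − (1/(n+1)) Σ_{j=1}^r Σ_{l=0}^n C(n+1,l) (−a_j)^{n+1−l} B_{n+1−l} S_l^{(r,k)}(x|a_1,…,a_r) − (1/(n+1)) ( S_{n+1}^{(r+1,k)}(x|a_1,…,a_r,1) − S_{n+1}^{(r+1,k−1)}(x|a_1,…,a_r,1) ), where B_m is the m-th ordinary Bernoulli number. -/

import Mathlib

open PowerSeries Finset

/-- The formal power series `e^{c·t}` over a commutative `ℚ`-algebra `R`. -/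
noncomputable def expS {R : Type*} [CommRing R] [Algebra ℚ R] (c : R) : PowerSeries R :=
  PowerSeries.rescale c (PowerSeries.exp R)

/-- The formal power series `Li_k(1 - e^{-t})` over `ℂ`, where
`Li_k(z) = ∑_{m ≥ 1} z^m / m^k` is the `k`-th polylogarithm.  Since `1 - e^{-t}`
has order `1`, the coefficient of `t^n` only involves the terms with `1 ≤ m ≤ n`. -/
noncomputable def Lik (k : ℤ) : PowerSeries ℂ :=
  PowerSeries.mk fun n => ∑ m ∈ Finset.Icc 1 n,
    ((m : ℂ) ^ k)⁻¹ * PowerSeries.coeff n ((1 - expS (-1 : ℂ)) ^ m)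

/-- The exponential generating function `∑_n p n · t^n / n!` of a sequence of
complex polynomials. -/
noncomputable def egf (p : ℕ → Polynomial ℂ) : PowerSeries (Polynomial ℂ) :=
  PowerSeries.mk fun n => ((n.factorial : ℂ))⁻¹ • p n

theorem coeff_derivativeFun' {R : Type*} [CommSemiring R] (f : PowerSeries R) (n : ℕ) :
    PowerSeries.coeff n f.derivativeFun = PowerSeries.coeff (n + 1) f * (n + 1) :=
  PowerSeries.coeff_derivative f n

theorem derivativeFun_C' {R : Type*} [CommSemiring R] (r : R) :
    PowerSeries.derivativeFun (PowerSeries.C r) = 0 :=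
  PowerSeries.derivative_C

section basic
variable {R : Type*} [CommRing R] [Algebra ℚ R]

theorem derivativeFun_expS (c : R) :
    PowerSeries.derivativeFun (expS c) = C c * expS c := by
  ext n
  rw [coeff_derivativeFun', expS, coeff_rescale, coeff_exp, coeff_C_mul,
    coeff_rescale, coeff_exp]
  rw [pow_succ]
  have : (algebraMap ℚ R) (1 / (Nat.factorial (n+1) : ℚ)) * ((n:R) + 1)
      = algebraMap ℚ R (1 / (Nat.factorial n : ℚ)) := by
    rw [show ((n:R)+1) = algebraMap ℚ R ((n:ℚ)+1) by push_cast; simp, ← map_mul]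
    congr 1
    rw [Nat.factorial_succ]
    push_cast
    rw [div_mul_eq_mul_div, one_mul, div_eq_div_iff] <;>
      [skip; positivity; positivity]
    ring
  rw [mul_assoc, this]
  ring

theorem expS_mul_expS (c d : R) : expS c * expS d = expS (c + d) :=
  exp_mul_exp_eq_exp_add c d

theorem expS_zero : expS (0 : R) = 1 := by
  rw [expS, rescale_zero]
  simp

theorem expS_neg_one_mul (c : R) : expS (-c) * expS c = 1 := by
  rw [expS_mul_expS, neg_add_cancel, expS_zero]

theorem constantCoeff_expS (c : R) : constantCoeff (expS c) = 1 := by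
  rw [expS, ← coeff_zero_eq_constantCoeff_apply, coeff_rescale, pow_zero, one_mul, coeff_exp]
  simp

/-- Bernoulli-type series for parameter `c`. -/
noncomputable def Bp (c : R) : PowerSeries R := rescale (-c) (bernoulliPowerSeries R)

theorem coeff_Bp (c : R) (m : ℕ) :
    coeff m (Bp c) = (-c) ^ m * algebraMap ℚ R (bernoulli m / m.factorial) := by
  rw [Bp, coeff_rescale, bernoulliPowerSeries, coeff_mk]

theorem Bp_mul (c : R) : Bp c * (expS c - 1) = C c * X * expS c := by
  have h0 := bernoulliPowerSeries_mul_exp_sub_one R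
  have h1 := congrArg (rescale (-c)) h0
  rw [map_mul, map_sub, map_one, rescale_X] at h1
  have h2 : rescale (-c) (exp R) = expS (-c) := rfl
  rw [h2, map_neg] at h1
  have hmul : expS (-c) * expS c = 1 := expS_neg_one_mul c
  rw [Bp]
  linear_combination (-(expS c)) * h1 + (rescale (-c) (bernoulliPowerSeries R)) * hmul

omit [Algebra ℚ R] in
theorem derivativeFun_sub (f g : PowerSeries R) :
    PowerSeries.derivativeFun (f - g) = f.derivativeFun - g.derivativeFun := by
  ext m
  rw [coeff_derivativeFun', map_sub, map_sub, coeff_derivativeFun', coeff_derivativeFun', sub_mul]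

omit [Algebra ℚ R] in
theorem derivativeFun_pow (f : PowerSeries R) (m : ℕ) :
    PowerSeries.derivativeFun (f ^ m)
      = (m : PowerSeries R) * f ^ (m-1) * f.derivativeFun := by
  induction m with
  | zero => simp [PowerSeries.derivativeFun_one]
  | succ m ih =>
    rw [pow_succ, PowerSeries.derivativeFun_mul, ih, smul_eq_mul, smul_eq_mul,
      Nat.add_sub_cancel]
    rcases Nat.eq_zero_or_pos m with hm | hm
    · subst hm; simp
    · have h2 : f * f ^ (m-1) = f ^ m := by
        rw [← pow_succ']
        congr 1
        omega
      push_cast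
      linear_combination ((m : PowerSeries R) * f.derivativeFun) * h2

omit [Algebra ℚ R] in
theorem derivativeFun_zero' : PowerSeries.derivativeFun (0 : PowerSeries R) = 0 := by
  ext m
  rw [coeff_derivativeFun']
  simp

theorem derivativeFun_X' : PowerSeries.derivativeFun (X : PowerSeries R) = 1 := by
  ext m
  rw [coeff_derivativeFun', coeff_X]
  rcases m with _ | m
  · simp
  · rw [if_neg (by omega)]
    simp

theorem derivativeFun_u : PowerSeries.derivativeFun (1 - expS (-1 : R)) = expS (-1 : R) := by
  rw [derivativeFun_sub, PowerSeries.derivativeFun_one, zero_sub, derivativeFun_expS,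
    map_neg, map_one, neg_mul, one_mul, neg_neg]

end basic

section maps
variable {A A' : Type*} [CommRing A] [CommRing A']

theorem map_rescale' (f : A →+* A') (c : A) (φ : PowerSeries A) :
    PowerSeries.map f (rescale c φ) = rescale (f c) (PowerSeries.map f φ) := by
  ext n
  rw [coeff_map, coeff_rescale, coeff_rescale, coeff_map, map_mul, map_pow]

theorem derivativeFun_map (f : A →+* A') (φ : PowerSeries A) :
    PowerSeries.derivativeFun (PowerSeries.map f φ)
      = PowerSeries.map f (PowerSeries.derivativeFun φ) := by
  ext n
  rw [coeff_derivativeFun', coeff_map, coeff_map, coeff_derivativeFun', map_mul]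
  simp

end maps

theorem mapC_exp :
    PowerSeries.map (Polynomial.C : ℂ →+* Polynomial ℂ) (exp ℂ) = exp (Polynomial ℂ) := by
  ext n
  rw [coeff_map, coeff_exp, coeff_exp, Polynomial.algebraMap_apply]

theorem mapC_expS (c : ℂ) :
    PowerSeries.map (Polynomial.C : ℂ →+* Polynomial ℂ) (expS c) = expS (Polynomial.C c) := by
  rw [expS, map_rescale', mapC_exp]; rfl

/-! Polylog lemmas over ℂ. -/

/-- the truncated polylog sum -/
noncomputable def LikN (k : ℤ) (N : ℕ) : PowerSeries ℂ :=
  ∑ m ∈ Finset.Icc 1 N, ((m : ℂ) ^ k)⁻¹ • (1 - expS (-1 : ℂ)) ^ m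

theorem coeff_u_pow_eq_zero {n m : ℕ} (h : n < m) :
    coeff n ((1 - expS (-1 : ℂ)) ^ m) = 0 := by
  have h0 : constantCoeff (1 - expS (-1 : ℂ)) = 0 := by
    rw [map_sub, map_one, constantCoeff_expS, sub_self]
  obtain ⟨v, hv⟩ := (X_dvd_iff (φ := 1 - expS (-1:ℂ))).2 h0
  rw [hv, mul_pow, coeff_mul]
  apply Finset.sum_eq_zero
  rintro ⟨i, j⟩ hij
  rw [Finset.HasAntidiagonal.mem_antidiagonal] at hij
  have : i ≠ m := by omega
  rw [coeff_X_pow, if_neg this, zero_mul]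

theorem coeff_Lik_eq (k : ℤ) {n N : ℕ} (h : n ≤ N) :
    coeff n (Lik k) = coeff n (LikN k N) := by
  rw [Lik, coeff_mk, LikN, map_sum]
  rw [← Finset.sum_subset (Finset.Icc_subset_Icc_right h)]
  · apply Finset.sum_congr rfl
    intro m _
    rw [coeff_smul, smul_eq_mul]
  · intro m hm hnm
    simp only [Finset.mem_Icc, not_and, not_le] at hm hnm
    rw [coeff_smul, coeff_u_pow_eq_zero (by omega), smul_zero]

theorem derivativeFun_smulC (z : ℂ) (f : PowerSeries ℂ) :
    PowerSeries.derivativeFun (z • f) = z • f.derivativeFun := by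
  rw [PowerSeries.smul_eq_C_mul, PowerSeries.smul_eq_C_mul, PowerSeries.derivativeFun_mul,
    derivativeFun_C', smul_eq_mul, smul_eq_mul, mul_zero, add_zero]

theorem derivativeFun_LikN (k : ℤ) (N : ℕ) :
    (1 - expS (-1 : ℂ)) * PowerSeries.derivativeFun (LikN k N)
      = expS (-1 : ℂ) * LikN (k-1) N := by
  set E := expS (-1 : ℂ) with hE
  have hsum : PowerSeries.derivativeFun (LikN k N)
      = ∑ m ∈ Finset.Icc 1 N,
          ((m:ℂ)^k)⁻¹ • PowerSeries.derivativeFun ((1 - E) ^ m) := by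
    rw [LikN]
    induction (Finset.Icc 1 N) using Finset.induction_on with
    | empty => simp [derivativeFun_zero']
    | insert _ _ h ih =>
      rw [Finset.sum_insert h, Finset.sum_insert h, PowerSeries.derivativeFun_add, ih,
        derivativeFun_smulC]
  rw [hsum, LikN, Finset.mul_sum, Finset.mul_sum]
  apply Finset.sum_congr rfl
  intro m hm
  rw [Finset.mem_Icc] at hm
  have hm1 : 1 ≤ m := hm.1
  rw [derivativeFun_pow, derivativeFun_u]
  have hmC : (m : ℂ) ≠ 0 := Nat.cast_ne_zero.2 (by omega)
  have hzp : ((m:ℂ) ^ (k-1))⁻¹ = ((m:ℂ) ^ k)⁻¹ * m := by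
    rw [zpow_sub_one₀ hmC, mul_inv, inv_inv]
  have hpow : (1 - E) * ((1 - E) ^ (m-1) * E) = (1-E)^m * E := by
    rw [← mul_assoc, ← pow_succ']
    congr 2
    omega
  simp only [PowerSeries.smul_eq_C_mul, ← hE]
  rw [hzp, map_mul, map_natCast]
  linear_combination (PowerSeries.C (((m:ℂ)^k)⁻¹) * (m : PowerSeries ℂ)) * hpow

theorem derivativeFun_Lik (k : ℤ) :
    (1 - expS (-1 : ℂ)) * PowerSeries.derivativeFun (Lik k)
      = expS (-1 : ℂ) * Lik (k-1) := by
  ext n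
  rw [coeff_mul, coeff_mul]
  have h1 : ∀ p ∈ Finset.HasAntidiagonal.antidiagonal n,
      coeff p.1 (1 - expS (-1:ℂ)) * coeff p.2 (PowerSeries.derivativeFun (Lik k))
      = coeff p.1 (1 - expS (-1:ℂ))
          * coeff p.2 (PowerSeries.derivativeFun (LikN k (n+1))) := by
    rintro ⟨i, j⟩ hij
    rw [Finset.HasAntidiagonal.mem_antidiagonal] at hij
    congr 1
    rw [coeff_derivativeFun', coeff_derivativeFun', coeff_Lik_eq k (by omega : j + 1 ≤ n + 1)]
  have h2 : ∀ p ∈ Finset.HasAntidiagonal.antidiagonal n,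
      coeff p.1 (expS (-1:ℂ)) * coeff p.2 (Lik (k-1))
      = coeff p.1 (expS (-1:ℂ)) * coeff p.2 (LikN (k-1) (n+1)) := by
    rintro ⟨i, j⟩ hij
    rw [Finset.HasAntidiagonal.mem_antidiagonal] at hij
    congr 1
    exact coeff_Lik_eq (k-1) (by omega)
  rw [Finset.sum_congr rfl h1, Finset.sum_congr rfl h2, ← coeff_mul, ← coeff_mul,
    derivativeFun_LikN k (n+1)]

theorem X_mul_derivativeFun_prod {R : Type*} [CommRing R] [Algebra ℚ R] {ι : Type*}
    (s : Finset ι) (c : ι → R) :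
    X * PowerSeries.derivativeFun (∏ i ∈ s, (expS (c i) - 1))
      = (∑ i ∈ s, Bp (c i)) * ∏ i ∈ s, (expS (c i) - 1) := by
  classical
  induction s using Finset.induction_on with
  | empty => simp [PowerSeries.derivativeFun_one]
  | insert i s h ih =>
    rw [Finset.prod_insert h, Finset.sum_insert h, PowerSeries.derivativeFun_mul,
      smul_eq_mul, smul_eq_mul]
    have hDi : PowerSeries.derivativeFun (expS (c i) - 1) = C (c i) * expS (c i) := by
      rw [derivativeFun_sub, PowerSeries.derivativeFun_one, sub_zero, derivativeFun_expS]
    have hXDi : X * PowerSeries.derivativeFun (expS (c i) - 1)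
        = Bp (c i) * (expS (c i) - 1) := by
      rw [hDi]
      linear_combination (-1 : PowerSeries R) * Bp_mul (c i)
    linear_combination (expS (c i) - 1) * ih
      + (∏ i ∈ s, (expS (c i) - 1)) * hXDi
      + (PowerSeries.derivativeFun (∏ i ∈ s, (expS (c i) - 1))) * X * (by ring :
          (expS (c i) - 1) * X = X * (expS (c i) - 1))

theorem egf_coeff (p : ℕ → Polynomial ℂ) (m : ℕ) :
    PowerSeries.coeff m (egf p) = ((m.factorial : ℂ))⁻¹ • p m :=
  coeff_mk _ _

theorem stmt6 (r : ℕ) (hr : 0 < r) (k : ℤ) (a : Fin r → ℂ) (ha : ∀ j, a j ≠ 0)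
    (S T T' : ℕ → Polynomial ℂ)
    -- `S n` is the mixed-type polynomial `S_n^{(r,k)}(x|a_1,…,a_r)`:
    (hS : (PowerSeries.X : PowerSeries (Polynomial ℂ)) ^ r
        * PowerSeries.map Polynomial.C (Lik k) * expS Polynomial.X
        = (∏ j, (expS (Polynomial.C (a j)) - 1)) * (1 - expS (-1 : Polynomial ℂ)) * egf S)
    -- `T n` is the mixed-type polynomial `S_n^{(r+1,k)}(x|a_1,…,a_r,1)`:
    (hT : (PowerSeries.X : PowerSeries (Polynomial ℂ)) ^ (r + 1)
        * PowerSeries.map Polynomial.C (Lik k) * expS Polynomial.X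
        = (∏ j : Fin (r + 1), (expS (Polynomial.C ((Fin.snoc a 1 : Fin (r + 1) → ℂ) j)) - 1))
          * (1 - expS (-1 : Polynomial ℂ)) * egf T)
    -- `T' n` is the mixed-type polynomial `S_n^{(r+1,k-1)}(x|a_1,…,a_r,1)`:
    (hT' : (PowerSeries.X : PowerSeries (Polynomial ℂ)) ^ (r + 1)
        * PowerSeries.map Polynomial.C (Lik (k - 1)) * expS Polynomial.X
        = (∏ j : Fin (r + 1), (expS (Polynomial.C ((Fin.snoc a 1 : Fin (r + 1) → ℂ) j)) - 1))
          * (1 - expS (-1 : Polynomial ℂ)) * egf T')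
    (n : ℕ) :
    S (n + 1) = Polynomial.X * S n
      - Polynomial.C (((n : ℂ) + 1))⁻¹
        * (∑ j : Fin r, ∑ l ∈ Finset.range (n + 1),
            Polynomial.C (((n + 1).choose l : ℂ) * (-(a j)) ^ (n + 1 - l)
              * ((bernoulli (n + 1 - l) : ℚ) : ℂ)) * S l)
      - Polynomial.C (((n : ℂ) + 1))⁻¹ * (T (n + 1) - T' (n + 1)) := by
  classical
  set E : PowerSeries (Polynomial ℂ) := expS (-1 : Polynomial ℂ) with hEdef
  set u : PowerSeries (Polynomial ℂ) := 1 - E with hudef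
  set W : PowerSeries (Polynomial ℂ) := expS (1 : Polynomial ℂ) - 1 with hWdef
  set P : PowerSeries (Polynomial ℂ) := ∏ j, (expS (Polynomial.C (a j)) - 1) with hPdef
  set Lk : PowerSeries (Polynomial ℂ) := PowerSeries.map Polynomial.C (Lik k) with hLkdef
  set Lk' : PowerSeries (Polynomial ℂ) := PowerSeries.map Polynomial.C (Lik (k-1)) with hLk'def
  set Ex : PowerSeries (Polynomial ℂ) := expS (Polynomial.X : Polynomial ℂ) with hExdef
  set Fs : PowerSeries (Polynomial ℂ) := (X : PowerSeries (Polynomial ℂ)) ^ r * Lk * Ex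
    with hFdef
  set G : PowerSeries (Polynomial ℂ) := egf S with hGdef
  set BB : PowerSeries (Polynomial ℂ) := ∑ j, Bp (Polynomial.C (a j)) with hBBdef
  set CX : PowerSeries (Polynomial ℂ) := PowerSeries.C Polynomial.X with hCXdef
  -- rewrite the `Fin (r+1)` products
  have hQ : (∏ j : Fin (r+1),
      (expS (Polynomial.C ((Fin.snoc a 1 : Fin (r+1) → ℂ) j)) - 1)) = P * W := by
    rw [Fin.prod_univ_castSucc, hPdef, hWdef]
    congr 1
    · apply Finset.prod_congr rfl
      intro i _
      rw [Fin.snoc_castSucc]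
    · rw [Fin.snoc_last, map_one]
  rw [hQ] at hT hT'
  have h2 : X * Fs = P * W * u * egf T := by
    have hx : X * Fs = X ^ (r+1) * Lk * Ex := by rw [hFdef]; ring
    rw [hx, hT]
  have h3 : (X : PowerSeries (Polynomial ℂ)) ^ (r+1) * Lk' * Ex = P * W * u * egf T' := hT'
  have hDu : PowerSeries.derivativeFun u = E := derivativeFun_u
  have h4 : PowerSeries.derivativeFun Fs
      = (P * u) * PowerSeries.derivativeFun G
        + PowerSeries.derivativeFun (P * u) * G := by
    rw [hS, PowerSeries.derivativeFun_mul, smul_eq_mul, smul_eq_mul]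
    ring
  have hDEx : PowerSeries.derivativeFun Ex = CX * Ex := by
    rw [hExdef, hCXdef, derivativeFun_expS]
  have hXr : X * PowerSeries.derivativeFun ((X : PowerSeries (Polynomial ℂ)) ^ r)
      = (r : PowerSeries (Polynomial ℂ)) * X ^ r := by
    rw [derivativeFun_pow, derivativeFun_X']
    have hre : r - 1 + 1 = r := by omega
    calc X * ((r : PowerSeries (Polynomial ℂ)) * X ^ (r-1) * 1)
        = (r : PowerSeries (Polynomial ℂ)) * (X * X ^ (r-1)) := by ring
      _ = (r : PowerSeries (Polynomial ℂ)) * X ^ (r-1+1) := by rw [pow_succ']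
      _ = (r : PowerSeries (Polynomial ℂ)) * X ^ r := by rw [hre]
  have h5 : X * PowerSeries.derivativeFun Fs
      = (r : PowerSeries (Polynomial ℂ)) * Fs
        + X ^ (r+1) * PowerSeries.derivativeFun Lk * Ex + CX * X * Fs := by
    rw [hFdef, PowerSeries.derivativeFun_mul, smul_eq_mul, smul_eq_mul,
      PowerSeries.derivativeFun_mul, smul_eq_mul, smul_eq_mul, hDEx]
    linear_combination (Lk * Ex) * hXr
  have h7 : X * PowerSeries.derivativeFun (P * u)
      = BB * (P * u) + X * P * E := by
    rw [PowerSeries.derivativeFun_mul, smul_eq_mul, smul_eq_mul, hDu]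
    have hXP : X * PowerSeries.derivativeFun P = BB * P := by
      rw [hPdef, hBBdef]
      exact X_mul_derivativeFun_prod _ _
    linear_combination u * hXP
  have h6 : u * PowerSeries.derivativeFun Lk = E * Lk' := by
    have hmap := congrArg (PowerSeries.map (Polynomial.C : ℂ →+* Polynomial ℂ))
      (derivativeFun_Lik k)
    rw [map_mul, map_mul, map_sub, map_one, mapC_expS, ← derivativeFun_map] at hmap
    simp only [map_neg, map_one] at hmap
    rw [← hEdef, ← hudef, ← hLkdef, ← hLk'def] at hmap
    exact hmap
  have h8 : E * W = u := by
    rw [hEdef, hWdef, hudef, mul_sub, mul_one, expS_mul_expS, neg_add_cancel, expS_zero, hEdef]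
  -- nonvanishing
  have hu0 : u ≠ 0 := by
    intro h
    have hc := congrArg (PowerSeries.coeff 1) h
    rw [hudef, hEdef] at hc
    simp [expS, coeff_rescale, coeff_exp] at hc
  have hW0 : W ≠ 0 := by
    intro h
    have hc := congrArg (PowerSeries.coeff 1) h
    rw [hWdef] at hc
    simp [expS, coeff_rescale, coeff_exp] at hc
  have hP0 : P ≠ 0 := by
    rw [hPdef]
    apply Finset.prod_ne_zero_iff.mpr
    intro j _
    intro h
    have hc := congrArg (PowerSeries.coeff 1) h
    simp [expS, coeff_rescale, coeff_exp] at hc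
    exact ha j hc
  have key : (u * u * W * P) * (X * PowerSeries.derivativeFun G)
      = (u * u * W * P) * (CX * X * G + (r : PowerSeries (Polynomial ℂ)) * G
          + egf T' - egf T - BB * G) := by
    have h1 : Fs = P * u * G := hS
    linear_combination (-(u*W*X)) * h4 + (u*W) * h5 + (-(u*W*G)) * h7
      + (W*Ex*(X:PowerSeries (Polynomial ℂ))^(r+1)) * h6 + (E*W) * h3
      + (P*W*u*(egf T')) * h8
      + (u*W*(r : PowerSeries (Polynomial ℂ))) * h1 + (u*W*CX*X) * h1
      + (-(u*X*P*G)) * h8 + (u*X) * h1 + (-u) * h2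
  have star : X * PowerSeries.derivativeFun G
      = CX * X * G + (r : PowerSeries (Polynomial ℂ)) * G + egf T' - egf T - BB * G :=
    mul_left_cancel₀ (mul_ne_zero (mul_ne_zero (mul_ne_zero hu0 hu0) hW0) hP0) key
  -- coefficient extraction at degree `n+1`
  have cL : PowerSeries.coeff (n+1) (X * PowerSeries.derivativeFun G)
      = (((n+1).factorial : ℂ))⁻¹ • S (n+1) * ((n : Polynomial ℂ) + 1) := by
    rw [coeff_succ_X_mul, coeff_derivativeFun', hGdef, egf_coeff]
  have cCX : PowerSeries.coeff (n+1) (CX * X * G)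
      = Polynomial.X * (((n.factorial : ℂ))⁻¹ • S n) := by
    rw [mul_assoc, hCXdef, coeff_C_mul, coeff_succ_X_mul, hGdef, egf_coeff]
  have cR : PowerSeries.coeff (n+1) ((r : PowerSeries (Polynomial ℂ)) * G)
      = (r : Polynomial ℂ) * ((((n+1).factorial : ℂ))⁻¹ • S (n+1)) := by
    rw [← map_natCast (PowerSeries.C (R := Polynomial ℂ)) r, coeff_C_mul, hGdef, egf_coeff]
  have cBB : PowerSeries.coeff (n+1) (BB * G)
      = ∑ j : Fin r, ((∑ l ∈ Finset.range (n+1), (((l.factorial : ℂ))⁻¹ • S l)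
            * ((-Polynomial.C (a j)) ^ (n+1-l)
              * algebraMap ℚ (Polynomial ℂ) (bernoulli (n+1-l) / (n+1-l).factorial)))
          + (((n+1).factorial : ℂ))⁻¹ • S (n+1)) := by
    rw [hBBdef, Finset.sum_mul, map_sum]
    apply Finset.sum_congr rfl
    intro j _
    rw [mul_comm, PowerSeries.coeff_mul, Finset.Nat.sum_antidiagonal_eq_sum_range_succ_mk,
      Finset.sum_range_succ]
    congr 1
    · apply Finset.sum_congr rfl
      intro l _
      rw [hGdef, egf_coeff, coeff_Bp]
    · rw [hGdef, egf_coeff, coeff_Bp, Nat.sub_self]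
      simp
  have eq1 : (((n+1).factorial : ℂ))⁻¹ • S (n+1) * ((n : Polynomial ℂ) + 1)
      = Polynomial.X * (((n.factorial : ℂ))⁻¹ • S n)
        + (r : Polynomial ℂ) * ((((n+1).factorial : ℂ))⁻¹ • S (n+1))
        + (((n+1).factorial : ℂ))⁻¹ • T' (n+1)
        - (((n+1).factorial : ℂ))⁻¹ • T (n+1)
        - ∑ j : Fin r, ((∑ l ∈ Finset.range (n+1), (((l.factorial : ℂ))⁻¹ • S l)
              * ((-Polynomial.C (a j)) ^ (n+1-l)
                * algebraMap ℚ (Polynomial ℂ) (bernoulli (n+1-l) / (n+1-l).factorial)))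
            + (((n+1).factorial : ℂ))⁻¹ • S (n+1)) := by
    have hc := congrArg (PowerSeries.coeff (n+1)) star
    rw [map_sub, map_sub, map_add, map_add, cL, cCX, cR, cBB] at hc
    rw [egf_coeff T', egf_coeff T] at hc
    exact hc
  rw [Finset.sum_add_distrib, Finset.sum_const, Finset.card_univ, Fintype.card_fin,
    nsmul_eq_mul] at eq1
  have hsum : ∀ j : Fin r, (∑ l ∈ Finset.range (n+1), (((l.factorial : ℂ))⁻¹ • S l)
        * ((-Polynomial.C (a j)) ^ (n+1-l)
          * algebraMap ℚ (Polynomial ℂ) (bernoulli (n+1-l) / (n+1-l).factorial)))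
      = Polynomial.C (((n.factorial : ℂ))⁻¹) * Polynomial.C ((((n : ℂ) + 1))⁻¹)
        * ∑ l ∈ Finset.range (n + 1),
            Polynomial.C (((n + 1).choose l : ℂ) * (-(a j)) ^ (n + 1 - l)
              * ((bernoulli (n + 1 - l) : ℚ) : ℂ)) * S l := by
    intro j
    rw [Finset.mul_sum]
    apply Finset.sum_congr rfl
    intro l hl
    have hl' : l ≤ n + 1 := by
      have := Finset.mem_range.mp hl
      omega
    have hB : algebraMap ℚ (Polynomial ℂ) (bernoulli (n+1-l) / (n+1-l).factorial)
        = Polynomial.C (((bernoulli (n+1-l) : ℚ) : ℂ) / (((n+1-l).factorial : ℂ))) := by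
      rw [Polynomial.algebraMap_apply]
      congr 1
      rw [eq_ratCast (algebraMap ℚ ℂ)]
      push_cast
      ring
    rw [Polynomial.smul_eq_C_mul, hB]
    have f1 : ((l.factorial : ℂ)) ≠ 0 := Nat.cast_ne_zero.mpr (Nat.factorial_ne_zero l)
    have f2 : (((n+1-l).factorial : ℂ)) ≠ 0 := Nat.cast_ne_zero.mpr (Nat.factorial_ne_zero _)
    have f3 : ((n.factorial : ℂ)) ≠ 0 := Nat.cast_ne_zero.mpr (Nat.factorial_ne_zero n)
    have f4 : ((n : ℂ) + 1) ≠ 0 := by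
      have h4 : ((n+1 : ℕ) : ℂ) ≠ 0 := Nat.cast_ne_zero.mpr (Nat.succ_ne_zero n)
      push_cast at h4
      exact h4
    have f5 : (((n+1).factorial : ℂ)) = ((n : ℂ) + 1) * (n.factorial : ℂ) := by
      rw [Nat.factorial_succ]
      push_cast
      ring
    have hCs : Polynomial.C (((l.factorial : ℂ))⁻¹)
          * Polynomial.C (((bernoulli (n+1-l) : ℚ) : ℂ) / (((n+1-l).factorial : ℂ)))
        = Polynomial.C (((n.factorial : ℂ))⁻¹) * Polynomial.C ((((n : ℂ) + 1))⁻¹)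
          * Polynomial.C (((n+1).choose l : ℂ))
          * Polynomial.C (((bernoulli (n+1-l) : ℚ) : ℂ)) := by
      rw [← Polynomial.C_mul, ← Polynomial.C_mul, ← Polynomial.C_mul, ← Polynomial.C_mul]
      congr 1
      rw [Nat.cast_choose ℂ hl', f5]
      field_simp
    rw [show Polynomial.C (((n + 1).choose l : ℂ) * (-(a j)) ^ (n + 1 - l)
          * ((bernoulli (n + 1 - l) : ℚ) : ℂ))
        = Polynomial.C (((n+1).choose l : ℂ)) * (-Polynomial.C (a j)) ^ (n+1-l)
          * Polynomial.C (((bernoulli (n+1-l) : ℚ) : ℂ)) by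
      rw [Polynomial.C_mul, Polynomial.C_mul, Polynomial.C_pow, Polynomial.C_neg]]
    linear_combination ((-Polynomial.C (a j)) ^ (n+1-l) * S l) * hCs
  rw [Finset.sum_congr rfl (fun j _ => hsum j), ← Finset.mul_sum] at eq1
  simp only [Polynomial.smul_eq_C_mul] at eq1
  rw [show ((n : Polynomial ℂ) + 1) = Polynomial.C ((n : ℂ) + 1) by
    rw [map_add, map_one, Polynomial.C_eq_natCast]] at eq1
  have f3 : ((n.factorial : ℂ)) ≠ 0 := Nat.cast_ne_zero.mpr (Nat.factorial_ne_zero n)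
  have f4 : ((n : ℂ) + 1) ≠ 0 := by
    have h4 : ((n+1 : ℕ) : ℂ) ≠ 0 := Nat.cast_ne_zero.mpr (Nat.succ_ne_zero n)
    push_cast at h4
    exact h4
  have f5 : (((n+1).factorial : ℂ)) = ((n : ℂ) + 1) * (n.factorial : ℂ) := by
    rw [Nat.factorial_succ]
    push_cast
    ring
  have e4 : Polynomial.C (((n.factorial : ℂ))⁻¹)
      = Polynomial.C ((((n+1).factorial : ℂ))⁻¹) * Polynomial.C ((n : ℂ) + 1) := by
    rw [← Polynomial.C_mul]
    congr 1
    rw [f5]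
    field_simp
  have e5 : Polynomial.C (((n.factorial : ℂ))⁻¹) * Polynomial.C ((((n : ℂ) + 1))⁻¹)
      = Polynomial.C ((((n+1).factorial : ℂ))⁻¹) := by
    rw [← Polynomial.C_mul]
    congr 1
    rw [f5, mul_inv]
    ring
  have final : Polynomial.C (((n.factorial : ℂ))⁻¹) * S (n + 1)
      = Polynomial.C (((n.factorial : ℂ))⁻¹) * (Polynomial.X * S n
        - Polynomial.C (((n : ℂ) + 1))⁻¹
          * (∑ j : Fin r, ∑ l ∈ Finset.range (n + 1),
              Polynomial.C (((n + 1).choose l : ℂ) * (-(a j)) ^ (n + 1 - l)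
                * ((bernoulli (n + 1 - l) : ℚ) : ℂ)) * S l)
        - Polynomial.C (((n : ℂ) + 1))⁻¹ * (T (n + 1) - T' (n + 1))) := by
    linear_combination eq1 + S (n+1) * e4 + (T (n+1) - T' (n+1)) * e5
  have hC0 : Polynomial.C (((n.factorial : ℂ))⁻¹) ≠ (0 : Polynomial ℂ) := by
    rw [Ne, Polynomial.C_eq_zero]
    exact inv_ne_zero (Nat.cast_ne_zero.mpr (Nat.factorial_ne_zero n))
  exact mul_left_cancel₀ hC0 final
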